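/- Suppose λ_{i,1}·λ_{j,2} + η ≠ 0 for all i, j, and suppose 1_Nᵀ·R̃⁻¹·1_N ≠ 0. Then the generalized least squares estimator μ̂ = (1_Nᵀ·R̃⁻¹·1_N)⁻¹·(1_Nᵀ·R̃⁻¹·vec(Y)) satisfies μ̂ = (Σ_{j=1}^{n2} Σ_{i=1}^{n1} ũ_{i,1}²·ũ_{j,2}² / (λ_{i,1}·λ_{j,2} + η))⁻¹ · (Σ_{j=1}^{n2} Σ_{i=1}^{n1} ũ_{i,1}·Ỹ_{i,j,0}·ũ_{j,2} / (λ_{i,1}·λ_{j,2} + η)), where Ỹ_{i,j,0} is the (i,j) entry of U1ᵀ·Y·U2. -/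

import Mathlib

open Matrix
open scoped Kronecker

/-- Column-stacking vectorization: the entry of `vec Y` at index `(j, i)` is `Y i j`. -/
def vec {n1 n2 : ℕ} (Y : Matrix (Fin n1) (Fin n2) ℝ) : Fin n2 × Fin n1 → ℝ :=
  fun p => Y p.2 p.1

lemma kron_mulVec {n1 n2 : ℕ} (A : Matrix (Fin n2) (Fin n2) ℝ) (B : Matrix (Fin n1) (Fin n1) ℝ)
    (a : Fin n2 → ℝ) (b : Fin n1 → ℝ) :
    (A ⊗ₖ B) *ᵥ (fun p => a p.1 * b p.2) = fun p => (A *ᵥ a) p.1 * (B *ᵥ b) p.2 := by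
  funext p
  simp only [Matrix.mulVec, dotProduct, Fintype.sum_prod_type, Matrix.kroneckerMap_apply]
  rw [Finset.sum_mul_sum]
  exact Finset.sum_congr rfl fun j _ => Finset.sum_congr rfl fun i _ => by ring

theorem stmt10 (n1 n2 : ℕ) (hn1 : 0 < n1) (hn2 : 0 < n2)
    (R1 U1 : Matrix (Fin n1) (Fin n1) ℝ) (R2 U2 : Matrix (Fin n2) (Fin n2) ℝ)
    (lam1 : Fin n1 → ℝ) (lam2 : Fin n2 → ℝ)
    (hR1sym : R1.IsSymm) (hR2sym : R2.IsSymm)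
    (hU1 : U1 * U1ᵀ = 1) (hU1' : U1ᵀ * U1 = 1)
    (hU2 : U2 * U2ᵀ = 1) (hU2' : U2ᵀ * U2 = 1)
    (hR1 : R1 = U1 * Matrix.diagonal lam1 * U1ᵀ)
    (hR2 : R2 = U2 * Matrix.diagonal lam2 * U2ᵀ)
    (η : ℝ)
    (hnz : ∀ (i : Fin n1) (j : Fin n2), lam1 i * lam2 j + η ≠ 0)
    (Y : Matrix (Fin n1) (Fin n2) ℝ)
    (hden : (fun _ : Fin n2 × Fin n1 => (1 : ℝ)) ⬝ᵥ
        ((R2 ⊗ₖ R1 + η • (1 : Matrix (Fin n2 × Fin n1) (Fin n2 × Fin n1) ℝ))⁻¹ *ᵥ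
          fun _ => 1) ≠ 0) :
    ((fun _ : Fin n2 × Fin n1 => (1 : ℝ)) ⬝ᵥ
        ((R2 ⊗ₖ R1 + η • (1 : Matrix (Fin n2 × Fin n1) (Fin n2 × Fin n1) ℝ))⁻¹ *ᵥ
          fun _ => 1))⁻¹ *
      ((fun _ : Fin n2 × Fin n1 => (1 : ℝ)) ⬝ᵥ
        ((R2 ⊗ₖ R1 + η • (1 : Matrix (Fin n2 × Fin n1) (Fin n2 × Fin n1) ℝ))⁻¹ *ᵥ _root_.vec Y))
    = (∑ j : Fin n2, ∑ i : Fin n1,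
          ((U1ᵀ *ᵥ fun _ => 1) i) ^ 2 * ((U2ᵀ *ᵥ fun _ => 1) j) ^ 2
            / (lam1 i * lam2 j + η))⁻¹ *
      (∑ j : Fin n2, ∑ i : Fin n1,
          (U1ᵀ *ᵥ fun _ => 1) i * (U1ᵀ * Y * U2) i j * (U2ᵀ *ᵥ fun _ => 1) j
            / (lam1 i * lam2 j + η)) := by
  set U : Matrix (Fin n2 × Fin n1) (Fin n2 × Fin n1) ℝ := U2 ⊗ₖ U1 with hU
  set d : Fin n2 × Fin n1 → ℝ := fun p => lam2 p.1 * lam1 p.2 + η with hd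
  have hdnz : ∀ p, d p ≠ 0 := fun p => by
    simpa [hd, mul_comm] using hnz p.2 p.1
  have hUt : Uᵀ = U2ᵀ ⊗ₖ U1ᵀ := (Matrix.kroneckerMap_transpose _ _ _).symm
  have hUUT : U * Uᵀ = 1 := by
    rw [hUt, hU, ← Matrix.mul_kronecker_mul, hU1, hU2, Matrix.one_kronecker_one]
  have hUTU : Uᵀ * U = 1 := by
    rw [hUt, hU, ← Matrix.mul_kronecker_mul, hU1', hU2', Matrix.one_kronecker_one]
  -- decomposition
  have hdecomp : R2 ⊗ₖ R1 + η • (1 : Matrix (Fin n2 × Fin n1) (Fin n2 × Fin n1) ℝ)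
      = U * Matrix.diagonal d * Uᵀ := by
    rw [hR1, hR2, Matrix.mul_kronecker_mul, Matrix.mul_kronecker_mul,
      Matrix.diagonal_kronecker_diagonal, Matrix.kroneckerMap_transpose]
    have h1 : Matrix.diagonal d
        = Matrix.diagonal (fun p : Fin n2 × Fin n1 => lam2 p.1 * lam1 p.2)
          + η • (1 : Matrix (Fin n2 × Fin n1) (Fin n2 × Fin n1) ℝ) := by
      rw [Matrix.smul_one_eq_diagonal, ← Matrix.diagonal_add]
    rw [h1, Matrix.mul_add, Matrix.add_mul, Matrix.mul_smul, Matrix.smul_mul, Matrix.mul_one,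
      ← hU, hUUT]
  -- inverse
  have hinv : (R2 ⊗ₖ R1 + η • (1 : Matrix (Fin n2 × Fin n1) (Fin n2 × Fin n1) ℝ))⁻¹
      = U * Matrix.diagonal (fun p => (d p)⁻¹) * Uᵀ := by
    apply Matrix.inv_eq_right_inv
    rw [hdecomp]
    calc U * Matrix.diagonal d * Uᵀ * (U * Matrix.diagonal (fun p => (d p)⁻¹) * Uᵀ)
        = U * Matrix.diagonal d * (Uᵀ * U) * Matrix.diagonal (fun p => (d p)⁻¹) * Uᵀ := by
          noncomm_ring
      _ = U * (Matrix.diagonal d * Matrix.diagonal (fun p => (d p)⁻¹)) * Uᵀ := by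
          rw [hUTU, Matrix.mul_one]; noncomm_ring
      _ = 1 := by
          rw [Matrix.diagonal_mul_diagonal]
          have : (fun p => d p * (d p)⁻¹) = fun _ : Fin n2 × Fin n1 => (1:ℝ) := by
            funext p; exact mul_inv_cancel₀ (hdnz p)
          rw [this, Matrix.diagonal_one, Matrix.mul_one, hUUT]
  -- dot product formula
  have key : ∀ x : Fin n2 × Fin n1 → ℝ,
      (fun _ : Fin n2 × Fin n1 => (1 : ℝ)) ⬝ᵥ
        ((R2 ⊗ₖ R1 + η • (1 : Matrix (Fin n2 × Fin n1) (Fin n2 × Fin n1) ℝ))⁻¹ *ᵥ x)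
      = ∑ p : Fin n2 × Fin n1, (Uᵀ *ᵥ fun _ => 1) p * (d p)⁻¹ * (Uᵀ *ᵥ x) p := by
    intro x
    rw [hinv, ← Matrix.mulVec_mulVec, ← Matrix.mulVec_mulVec,
      Matrix.dotProduct_mulVec, ← Matrix.mulVec_transpose]
    simp only [dotProduct, Matrix.mulVec_diagonal]
    exact Finset.sum_congr rfl fun p _ => by ring
  -- evaluate Uᵀ *ᵥ 1
  have hone : (Uᵀ *ᵥ fun _ => (1:ℝ)) = fun p => (U2ᵀ *ᵥ fun _ => (1:ℝ)) p.1 * (U1ᵀ *ᵥ fun _ => (1:ℝ)) p.2 := by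
    rw [hUt]
    have : (fun _ : Fin n2 × Fin n1 => (1:ℝ)) = fun p : Fin n2 × Fin n1 =>
        (fun _ : Fin n2 => (1:ℝ)) p.1 * (fun _ : Fin n1 => (1:ℝ)) p.2 := by
      funext p; simp
    rw [this]; exact kron_mulVec U2ᵀ U1ᵀ (fun _ => (1:ℝ)) (fun _ => (1:ℝ))
  -- evaluate Uᵀ *ᵥ vec Y
  have hvy : (Uᵀ *ᵥ _root_.vec Y) = fun p => (U1ᵀ * Y * U2) p.2 p.1 := by
    funext p
    rw [hUt]
    simp only [Matrix.mulVec, dotProduct, Fintype.sum_prod_type,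
      Matrix.kroneckerMap_apply, Matrix.mul_apply, _root_.vec, Matrix.transpose_apply]
    refine Finset.sum_congr rfl fun i _ => ?_
    rw [Finset.sum_mul]
    refine Finset.sum_congr rfl fun j _ => ?_
    ring
  rw [key, key, hone, hvy]
  congr 1
  · congr 1
    rw [Fintype.sum_prod_type]
    refine Finset.sum_congr rfl fun j _ => Finset.sum_congr rfl fun i _ => ?_
    rw [hd]
    field_simp
  · rw [Fintype.sum_prod_type]
    refine Finset.sum_congr rfl fun j _ => Finset.sum_congr rfl fun i _ => ?_
    rw [hd]
    field_simp
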